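/- An element x ∈ L is a torsion element (i.e., n·x = 0 for some positive integer n) if and only if δ(x) = 0; that is, the torsion subgroup of L equals the kernel of the degree map δ. In particular L has rank one. -/

import Mathlib

open scoped BigOperators

/-- The rank-one abelian group `L(p)`: the quotient of the free abelian group `ℤ^t`
on generators `e 0, …, e (t-1)` by the subgroup generated by the elements
`p i • e i - p 0 • e 0`. -/
abbrev LGrp (t : ℕ) (ht : 0 < t) (p : Fin t → ℕ) : Type :=
  (Fin t → ℤ) ⧸ AddSubgroup.closure
    (Set.range fun i : Fin t =>
      (p i : ℤ) • Pi.single i (1 : ℤ) - (p ⟨0, ht⟩ : ℤ) • Pi.single ⟨0, ht⟩ (1 : ℤ))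

/-- The image `x i` of the generator `e i` in `L(p)`. -/
def xgen (t : ℕ) (ht : 0 < t) (p : Fin t → ℕ) (i : Fin t) : LGrp t ht p :=
  QuotientAddGroup.mk (Pi.single i 1)

/-- The canonical element `c = p 0 • x 0` of `L(p)`. -/
def cElem (t : ℕ) (ht : 0 < t) (p : Fin t → ℕ) : LGrp t ht p :=
  (p ⟨0, ht⟩ : ℤ) • xgen t ht p ⟨0, ht⟩

/-- The dualizing element `ω = (t - 2) • c - (x 0 + ⋯ + x (t-1))` of `L(p)`. -/
def omegaElem (t : ℕ) (ht : 0 < t) (p : Fin t → ℕ) : LGrp t ht p :=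
  ((t : ℤ) - 2) • cElem t ht p - ∑ i, xgen t ht p i

/-- The positive cone `L₊ = {a 0 • x 0 + ⋯ + a (t-1) • x (t-1) : a i ∈ ℕ}`;
`x ≤ y` means `y - x ∈ L₊`. -/
def posCone (t : ℕ) (ht : 0 < t) (p : Fin t → ℕ) : Set (LGrp t ht p) :=
  { y | ∃ a : Fin t → ℕ, y = ∑ i, (a i : ℤ) • xgen t ht p i }

lemma lgrp_rel (t : ℕ) (ht : 0 < t) (p : Fin t → ℕ) (i : Fin t) :
    (p i : ℤ) • xgen t ht p i = (p ⟨0, ht⟩ : ℤ) • xgen t ht p ⟨0, ht⟩ := by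
  have h : (QuotientAddGroup.mk ((p i : ℤ) • Pi.single i (1 : ℤ)) : LGrp t ht p) =
      QuotientAddGroup.mk ((p ⟨0, ht⟩ : ℤ) • Pi.single ⟨0, ht⟩ (1 : ℤ)) :=
    (QuotientAddGroup.eq_iff_sub_mem).mpr (AddSubgroup.subset_closure ⟨i, rfl⟩)
  exact h

lemma lgrp_mk_eq_sum (t : ℕ) (ht : 0 < t) (p : Fin t → ℕ) (v : Fin t → ℤ) :
    (QuotientAddGroup.mk v : LGrp t ht p) = ∑ i, v i • xgen t ht p i := by
  have hv : v = ∑ i, v i • Pi.single i (1 : ℤ) := by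
    funext j
    simp [Finset.sum_apply, Pi.single_apply]
  calc (QuotientAddGroup.mk v : LGrp t ht p)
      = (QuotientAddGroup.mk' _) (∑ i, v i • Pi.single i (1 : ℤ)) := by rw [← hv]; rfl
    _ = ∑ i, v i • xgen t ht p i := by
        rw [map_sum]
        exact Finset.sum_congr rfl fun i _ => by rw [map_zsmul]; rfl

open scoped TensorProduct in
/-- an element `x ∈ L` is torsion iff `δ x = 0`, i.e. the torsion
subgroup of `L` is the kernel of the degree map; in particular `L` has rank one. -/
theorem torsion_eq_ker_degree
    (t : ℕ) (ht : 0 < t) (p : Fin t → ℕ) (hp : ∀ i, 2 ≤ p i)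
    (d : LGrp t ht p →+ ℤ)
    (hd : ∀ i : Fin t, d (xgen t ht p i) = ((Finset.univ.lcm p / p i : ℕ) : ℤ)) :
    (∀ x : LGrp t ht p, (∃ n : ℕ, 0 < n ∧ n • x = 0) ↔ d x = 0) ∧
    Module.rank ℚ (ℚ ⊗[ℤ] LGrp t ht p) = 1 := by
  classical
  set P : ℕ := Finset.univ.lcm p with hPdef
  have hPdvd : ∀ i, p i ∣ P := fun i => Finset.dvd_lcm (Finset.mem_univ i)
  have hPne : P ≠ 0 := by
    intro h
    rw [hPdef] at h
    rcases Finset.lcm_eq_zero_iff.mp h with ⟨i, _, hi⟩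
    have := hp i
    omega
  have hPpos : 0 < P := Nat.pos_of_ne_zero hPne
  -- key identity: P • x = d x • c
  have hPi : ∀ i, (P : ℤ) • xgen t ht p i = d (xgen t ht p i) • cElem t ht p := by
    intro i
    have h1 : (P : ℤ) = ((P / p i : ℕ) : ℤ) * (p i : ℤ) := by
      rw [← Nat.cast_mul, Nat.div_mul_cancel (hPdvd i)]
    rw [hd i, cElem]
    calc (P : ℤ) • xgen t ht p i
        = ((P / p i : ℕ) : ℤ) • ((p i : ℤ) • xgen t ht p i) := by
          rw [smul_smul, ← h1]
      _ = ((P / p i : ℕ) : ℤ) • ((p ⟨0, ht⟩ : ℤ) • xgen t ht p ⟨0, ht⟩) := by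
          rw [lgrp_rel]
  have sum_zsmul : ∀ (a : Fin t → ℤ) (y : LGrp t ht p),
      (∑ i, a i) • y = ∑ i, a i • y := by
    intro a y
    exact map_sum (AddMonoidHom.mk' (fun n : ℤ => n • y) (fun m n => add_zsmul y m n)) a
      Finset.univ
  have hkey : ∀ x : LGrp t ht p, (P : ℤ) • x = d x • cElem t ht p := by
    intro x
    obtain ⟨v, rfl⟩ := QuotientAddGroup.mk_surjective x
    rw [lgrp_mk_eq_sum, show (P : ℤ) • ∑ i, v i • xgen t ht p i = ∑ i, (P : ℤ) • (v i • xgen t ht p i) from map_sum (AddMonoidHom.mk' (fun y : LGrp t ht p => (P : ℤ) • y) (fun a b => zsmul_add a b _)) _ _, map_sum, sum_zsmul]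
    refine Finset.sum_congr rfl fun i _ => ?_
    rw [map_zsmul, smul_comm, hPi i, smul_assoc]
  have hdc : d (cElem t ht p) = (P : ℤ) := by
    rw [cElem, map_zsmul, hd, smul_eq_mul, ← Nat.cast_mul,
      Nat.mul_div_cancel' (hPdvd ⟨0, ht⟩)]
  constructor
  · intro x
    constructor
    · rintro ⟨n, hn, hnx⟩
      have : (n : ℤ) * d x = 0 := by
        have := congrArg d hnx
        rwa [map_nsmul, map_zero, nsmul_eq_mul] at this
      rcases mul_eq_zero.mp this with h | h
      · exact absurd h (by exact_mod_cast hn.ne')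
      · exact h
    · intro hx
      exact ⟨P, hPpos, by rw [← natCast_zsmul, hkey, hx, zero_zsmul]⟩
  · -- rank part
    set g : LGrp t ht p →ₗ[ℤ] ℚ := ((Int.castAddHom ℚ).comp d).toIntLinearMap with hg
    set f : ℚ ⊗[ℤ] LGrp t ht p →ₗ[ℚ] ℚ :=
      TensorProduct.AlgebraTensorModule.lift
        (LinearMap.toSpanSingleton ℚ (LGrp t ht p →ₗ[ℤ] ℚ) g) with hf
    have hfval : ∀ (q : ℚ) (x : LGrp t ht p), f (q ⊗ₜ[ℤ] x) = q * (d x : ℚ) := by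
      intro q x
      simp [hf, hg, LinearMap.toSpanSingleton_apply, smul_eq_mul]
    have hcne : (1 : ℚ) ⊗ₜ[ℤ] cElem t ht p ≠ 0 := by
      intro h
      have h2 := hfval 1 (cElem t ht p)
      rw [h, map_zero, hdc] at h2
      have hP0 : (P : ℚ) = 0 := by push_cast at h2; linarith
      exact hPne (by exact_mod_cast hP0)
    haveI : Nontrivial (ℚ ⊗[ℤ] LGrp t ht p) := nontrivial_of_ne _ 0 hcne
    haveI : NoZeroSMulDivisors ℚ (ℚ ⊗[ℤ] LGrp t ht p) := by
      refine ⟨fun {a z} h => ?_⟩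
      by_cases ha : a = 0
      · exact Or.inl ha
      · refine Or.inr ?_
        have := congrArg (fun u => a⁻¹ • u) h
        simpa [smul_smul, inv_mul_cancel₀ ha] using this
    have hone : (1 : Cardinal) ≤ Module.rank ℚ (ℚ ⊗[ℤ] LGrp t ht p) :=
      Cardinal.one_le_iff_pos.mpr rank_pos
    have hqc : ∀ q : ℚ, q ⊗ₜ[ℤ] cElem t ht p = q • ((1:ℚ) ⊗ₜ[ℤ] cElem t ht p) := by
      intro q
      rw [TensorProduct.smul_tmul', smul_eq_mul, mul_one]
    have hPsmul : ∀ (q : ℚ) (x : LGrp t ht p),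
        (P : ℚ) • (q ⊗ₜ[ℤ] x) = (q * (d x : ℚ)) • ((1:ℚ) ⊗ₜ[ℤ] cElem t ht p) := by
      intro q x
      calc (P : ℚ) • (q ⊗ₜ[ℤ] x) = ((P : ℤ) : ℚ) • (q ⊗ₜ[ℤ] x) := by norm_cast
        _ = (P : ℤ) • (q ⊗ₜ[ℤ] x) := Int.cast_smul_eq_zsmul ℚ _ _
        _ = q ⊗ₜ[ℤ] ((P : ℤ) • x) := (TensorProduct.tmul_smul _ _ _).symm
        _ = q ⊗ₜ[ℤ] (d x • cElem t ht p) := by rw [hkey]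
        _ = d x • (q ⊗ₜ[ℤ] cElem t ht p) := TensorProduct.tmul_smul _ _ _
        _ = ((d x : ℚ)) • (q ⊗ₜ[ℤ] cElem t ht p) := (Int.cast_smul_eq_zsmul ℚ _ _).symm
        _ = ((d x : ℚ)) • (q • ((1:ℚ) ⊗ₜ[ℤ] cElem t ht p)) := by rw [hqc]
        _ = (q * (d x : ℚ)) • ((1:ℚ) ⊗ₜ[ℤ] cElem t ht p) := by
            rw [smul_smul, mul_comm]
    have hspan : Submodule.span ℚ {(1:ℚ) ⊗ₜ[ℤ] cElem t ht p} =
        (⊤ : Submodule ℚ (ℚ ⊗[ℤ] LGrp t ht p)) := by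
      rw [Submodule.eq_top_iff']
      intro z
      induction z using TensorProduct.induction_on with
      | zero => exact Submodule.zero_mem _
      | tmul q x =>
          rw [Submodule.mem_span_singleton]
          refine ⟨(q * (d x : ℚ)) / P, ?_⟩
          have hPQ : (P : ℚ) ≠ 0 := by exact_mod_cast hPne
          have h1 : (P:ℚ)⁻¹ • ((P:ℚ) • (q ⊗ₜ[ℤ] x)) = q ⊗ₜ[ℤ] x := by
            rw [smul_smul, inv_mul_cancel₀ hPQ, one_smul]
          rw [← h1, hPsmul q x, smul_smul]
          congr 1
          field_simp
      | add a b ha hb => exact Submodule.add_mem _ ha hb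
    have hle : Module.rank ℚ (ℚ ⊗[ℤ] LGrp t ht p) ≤ 1 := by
      have h := rank_span_le (R := ℚ) ({(1:ℚ) ⊗ₜ[ℤ] cElem t ht p} : Set _)
      rw [hspan, rank_top] at h
      simpa using h
    exact le_antisymm hle hone
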